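/- arXiv:math/0612627 — 2 statements merged into one kernel-verified Lean document; each statement's English description precedes it below -/
import Mathlib

section
/- For the probability density function f(x) = k/x on the interval [10^S, 10^(S+G)], where S is a real number, G is a positive integer, and k = 1/(G·ln 10) is the normalizing constant, the probability that a random variable with this density has first significant digit d equals log₁₀(1 + 1/d) for each digit d ∈ {1,...,9}. -/
open MeasureTheory
open scoped ENNReal

/-- `d` is the first significant digit of `x`. -/
def firstDigit (d : ℕ) (x : ℝ) : Prop :=
  ∃ n : ℤ, (d : ℝ) * 10 ^ n ≤ x ∧ x < ((d : ℝ) + 1) * 10 ^ n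

/-- The union of digit-intervals on the log scale. -/
def digitSet (α β : ℝ) : Set ℝ := ⋃ n : ℤ, Set.Ico ((n : ℝ) + α) ((n : ℝ) + β)

lemma digitSet_meas (α β : ℝ) : MeasurableSet (digitSet α β) :=
  MeasurableSet.iUnion fun _ => measurableSet_Ico

lemma digitSet_vol_one {α β : ℝ} (hα : 0 ≤ α) (hαβ : α ≤ β) (hβ : β ≤ 1) (t : ℝ) :
    volume (digitSet α β ∩ Set.Ico t (t + 1)) = ENNReal.ofReal (β - α) := by
  set n0 : ℤ := ⌊t - α⌋ with hn0def
  have hn0 : (n0 : ℝ) ≤ t - α := Int.floor_le _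
  have hn0' : t - α < (n0 : ℝ) + 1 := Int.lt_floor_add_one _
  have hset : digitSet α β ∩ Set.Ico t (t + 1) =
      (Set.Ico ((n0 : ℝ) + α) ((n0 : ℝ) + β) ∩ Set.Ico t (t + 1)) ∪
      (Set.Ico ((n0 : ℝ) + 1 + α) ((n0 : ℝ) + 1 + β) ∩ Set.Ico t (t + 1)) := by
    ext u
    simp only [digitSet, Set.mem_inter_iff, Set.mem_iUnion, Set.mem_Ico, Set.mem_union]
    constructor
    · rintro ⟨⟨n, hn1, hn2⟩, ht1, ht2⟩
      have hfl : ⌊u - α⌋ = n := by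
        rw [Int.floor_eq_iff]
        constructor <;> push_cast <;> linarith
      have h1 : n0 ≤ n := by
        rw [← hfl, hn0def]
        exact Int.floor_le_floor (by linarith)
      have h2 : n ≤ n0 + 1 := by
        have : ⌊u - α⌋ ≤ ⌊(t - α) + 1⌋ := Int.floor_le_floor (by linarith)
        rwa [Int.floor_add_one, ← hn0def, hfl] at this
      rcases (by omega : n = n0 ∨ n = n0 + 1) with rfl | rfl
      · exact Or.inl ⟨⟨hn1, hn2⟩, ht1, ht2⟩
      · refine Or.inr ⟨⟨?_, ?_⟩, ht1, ht2⟩ <;> push_cast at hn1 hn2 ⊢ <;> linarith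
    · rintro (⟨⟨h1, h2⟩, h3⟩ | ⟨⟨h1, h2⟩, h3⟩)
      · exact ⟨⟨n0, h1, h2⟩, h3⟩
      · exact ⟨⟨n0 + 1, by push_cast; linarith, by push_cast; linarith⟩, h3⟩
  rw [hset, measure_union ?disj ((measurableSet_Ico).inter measurableSet_Ico)]
  case disj =>
    refine Disjoint.mono Set.inter_subset_left Set.inter_subset_left ?_
    rw [Set.Ico_disjoint_Ico]
    refine le_trans (min_le_left _ _) (le_trans (by linarith) (le_max_right _ _))
  rw [Set.Ico_inter_Ico, Set.Ico_inter_Ico, Real.volume_Ico, Real.volume_Ico]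
  have hmax1 : max ((n0 : ℝ) + α) t = t := max_eq_right (by linarith)
  have hmax2 : max ((n0 : ℝ) + 1 + α) t = (n0 : ℝ) + 1 + α := max_eq_left (by linarith)
  have hmin1 : min ((n0 : ℝ) + β) (t + 1) = (n0 : ℝ) + β := min_eq_left (by linarith)
  rw [hmax1, hmax2, hmin1]
  rcases le_total t ((n0 : ℝ) + β) with hc | hc
  · have hmin2 : min ((n0 : ℝ) + 1 + β) (t + 1) = t + 1 := min_eq_right (by linarith)
    rw [hmin2, ← ENNReal.ofReal_add (by linarith) (by linarith)]
    ring_nf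
  · have hmin2 : min ((n0 : ℝ) + 1 + β) (t + 1) = (n0 : ℝ) + 1 + β := min_eq_left (by linarith)
    rw [hmin2, ENNReal.ofReal_of_nonpos (by linarith), zero_add]
    congr 1
    ring
lemma digitSet_vol {α β : ℝ} (hα : 0 ≤ α) (hαβ : α ≤ β) (hβ : β ≤ 1) (t : ℝ) (m : ℕ) :
    volume (digitSet α β ∩ Set.Ico t (t + m)) = m * ENNReal.ofReal (β - α) := by
  induction m with
  | zero => simp
  | succ m ih =>
      have hsplit : Set.Ico t (t + (m + 1 : ℕ)) =
          Set.Ico t (t + m) ∪ Set.Ico (t + m) ((t + m) + 1) := by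
        rw [Set.Ico_union_Ico_eq_Ico (by linarith [Nat.cast_nonneg (α := ℝ) m]) (by linarith)]
        congr 1
        push_cast
        ring
      rw [hsplit, Set.inter_union_distrib_left,
        measure_union ?disj ((digitSet_meas α β).inter measurableSet_Ico), ih,
        digitSet_vol_one hα hαβ hβ]
      · push_cast
        ring
      case disj =>
        refine Disjoint.mono Set.inter_subset_right Set.inter_subset_right ?_
        rw [Set.Ico_disjoint_Ico]
        exact le_trans (min_le_left _ _) (le_max_right _ _)

theorem stmt0 (S : ℝ) (G : ℕ) (hG : 1 ≤ G) (k : ℝ)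
    (hk : k = 1 / ((G : ℝ) * Real.log 10))
    (d : ℕ) (hd : d ∈ Finset.Icc 1 9) :
    (∫ x in {x : ℝ | x ∈ Set.Icc ((10:ℝ) ^ S) ((10:ℝ) ^ (S + G)) ∧ firstDigit d x}, k / x)
      = Real.logb 10 (1 + 1 / (d : ℝ)) := by
  rw [Finset.mem_Icc] at hd
  have hd1 : (1 : ℝ) ≤ d := by exact_mod_cast hd.1
  have hd9 : (d : ℝ) ≤ 9 := by exact_mod_cast hd.2
  have hdpos : (0 : ℝ) < d := by linarith
  set α : ℝ := Real.logb 10 d with hαdef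
  set β : ℝ := Real.logb 10 ((d : ℝ) + 1) with hβdef
  have h110 : (1 : ℝ) < 10 := by norm_num
  have hα : 0 ≤ α := Real.logb_nonneg h110 hd1
  have hαβ : α < β := Real.logb_lt_logb h110 hdpos (by linarith)
  have hβ : β ≤ 1 := by
    have : Real.logb 10 ((d : ℝ) + 1) ≤ Real.logb 10 10 :=
      Real.logb_le_logb_of_le h110 (by linarith) (by linarith)
    rwa [Real.logb_self_eq_one h110] at this
  have h10α : (10 : ℝ) ^ α = d := Real.rpow_logb (by norm_num) (by norm_num) hdpos
  have h10β : (10 : ℝ) ^ β = (d : ℝ) + 1 := Real.rpow_logb (by norm_num) (by norm_num) (by linarith)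
  -- the set is the image of `digitSet α β ∩ Icc S (S+G)` under `u ↦ 10 ^ u`
  have himg : {x : ℝ | x ∈ Set.Icc ((10:ℝ) ^ S) ((10:ℝ) ^ (S + G)) ∧ firstDigit d x}
      = (fun u : ℝ => (10 : ℝ) ^ u) '' (digitSet α β ∩ Set.Icc S (S + G)) := by
    ext x
    simp only [Set.mem_setOf_eq, Set.mem_Icc, Set.mem_image, Set.mem_inter_iff, digitSet,
      Set.mem_iUnion, Set.mem_Ico, firstDigit]
    constructor
    · rintro ⟨⟨hx1, hx2⟩, n, hn1, hn2⟩
      have hxpos : 0 < x := lt_of_lt_of_le (Real.rpow_pos_of_pos (by norm_num) S) hx1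
      have e1 : (10 : ℝ) ^ ((n : ℝ) + α) = (d : ℝ) * 10 ^ (n : ℤ) := by
        rw [Real.rpow_add (by norm_num), h10α, Real.rpow_intCast, mul_comm]
      have e2 : (10 : ℝ) ^ ((n : ℝ) + β) = ((d : ℝ) + 1) * 10 ^ (n : ℤ) := by
        rw [Real.rpow_add (by norm_num), h10β, Real.rpow_intCast, mul_comm]
      have hdn : (0:ℝ) < (d : ℝ) * 10 ^ (n : ℤ) :=
        mul_pos hdpos (zpow_pos (by norm_num) n)
      refine ⟨Real.logb 10 x, ⟨⟨n, ?_, ?_⟩, ?_, ?_⟩,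
        Real.rpow_logb (by norm_num) (by norm_num) hxpos⟩
      · have := Real.logb_le_logb_of_le h110 hdn hn1
        rwa [← e1, Real.logb_rpow (by norm_num) (by norm_num)] at this
      · have := Real.logb_lt_logb h110 hxpos hn2
        rwa [← e2, Real.logb_rpow (by norm_num) (by norm_num)] at this
      · have := Real.logb_le_logb_of_le h110 (Real.rpow_pos_of_pos (by norm_num) S) hx1
        rwa [Real.logb_rpow (by norm_num) (by norm_num)] at this
      · have := Real.logb_le_logb_of_le h110 hxpos hx2
        rwa [Real.logb_rpow (by norm_num) (by norm_num)] at this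
    · rintro ⟨u, ⟨⟨n, hn1, hn2⟩, hu1, hu2⟩, rfl⟩
      have e1 : (10 : ℝ) ^ ((n : ℝ) + α) = (d : ℝ) * 10 ^ (n : ℤ) := by
        rw [Real.rpow_add (by norm_num), h10α, Real.rpow_intCast, mul_comm]
      have e2 : (10 : ℝ) ^ ((n : ℝ) + β) = ((d : ℝ) + 1) * 10 ^ (n : ℤ) := by
        rw [Real.rpow_add (by norm_num), h10β, Real.rpow_intCast, mul_comm]
      refine ⟨⟨?_, ?_⟩, n, ?_, ?_⟩
      · exact Real.rpow_le_rpow_left_iff h110 |>.mpr hu1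
      · exact Real.rpow_le_rpow_left_iff h110 |>.mpr hu2
      · rw [← e1]; exact Real.rpow_le_rpow_left_iff h110 |>.mpr hn1
      · rw [← e2]; exact Real.rpow_lt_rpow_left_iff h110 |>.mpr hn2
  have hs : MeasurableSet (digitSet α β ∩ Set.Icc S (S + G)) :=
    (digitSet_meas α β).inter measurableSet_Icc
  have hderiv : ∀ u ∈ digitSet α β ∩ Set.Icc S (S + G),
      HasDerivWithinAt (fun u : ℝ => (10 : ℝ) ^ u) ((10 : ℝ) ^ u * Real.log 10)
        (digitSet α β ∩ Set.Icc S (S + G)) u := fun u _ =>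
    ((Real.hasStrictDerivAt_const_rpow (by norm_num : (0:ℝ) < 10) u).hasDerivAt).hasDerivWithinAt
  have hmono : StrictMono (fun u : ℝ => (10 : ℝ) ^ u) := fun a b h =>
    Real.rpow_lt_rpow_left_iff h110 |>.mpr h
  have hinj : Set.InjOn (fun u : ℝ => (10 : ℝ) ^ u) (digitSet α β ∩ Set.Icc S (S + G)) :=
    hmono.injective.injOn
  rw [himg, integral_image_eq_integral_abs_deriv_smul hs hderiv hinj]
  have hcongr : ∀ u : ℝ, |(10 : ℝ) ^ u * Real.log 10| • (k / (10 : ℝ) ^ u) = k * Real.log 10 := by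
    intro u
    have hpos : (0 : ℝ) < (10 : ℝ) ^ u := Real.rpow_pos_of_pos (by norm_num) u
    rw [abs_of_pos (by positivity), smul_eq_mul]
    field_simp
  simp only [hcongr]
  rw [setIntegral_const]
  -- compute the measure
  have hvolIcc : volume (digitSet α β ∩ Set.Icc S (S + G))
      = (G : ℝ≥0∞) * ENNReal.ofReal (β - α) := by
    have h1 : volume (digitSet α β ∩ Set.Ico S (S + G)) = (G : ℝ≥0∞) * ENNReal.ofReal (β - α) :=
      digitSet_vol hα hαβ.le hβ S G
    apply le_antisymm
    · calc volume (digitSet α β ∩ Set.Icc S (S + G))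
          ≤ volume ((digitSet α β ∩ Set.Ico S (S + G)) ∪ {S + G}) := by
            apply measure_mono
            rintro u ⟨hu, h1, h2⟩
            rcases eq_or_lt_of_le h2 with rfl | h2
            · exact Or.inr rfl
            · exact Or.inl ⟨hu, h1, h2⟩
        _ ≤ volume (digitSet α β ∩ Set.Ico S (S + G)) + volume ({S + G} : Set ℝ) :=
            measure_union_le _ _
        _ = (G : ℝ≥0∞) * ENNReal.ofReal (β - α) := by
            rw [Real.volume_singleton, add_zero, h1]
    · rw [← h1]
      exact measure_mono (Set.inter_subset_inter_right _ Set.Ico_subset_Icc_self)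
  rw [measureReal_def, hvolIcc]
  have hlog : (0 : ℝ) < Real.log 10 := Real.log_pos h110
  have hGpos : (0 : ℝ) < (G : ℝ) := by exact_mod_cast hG
  rw [ENNReal.toReal_mul, ENNReal.toReal_ofReal (by linarith), ENNReal.toReal_natCast,
    smul_eq_mul, hk]
  have hfin : (G : ℝ) * (β - α) * (1 / ((G : ℝ) * Real.log 10) * Real.log 10) = β - α := by
    field_simp
  rw [hfin]
  have : (1 : ℝ) + 1 / d = ((d : ℝ) + 1) / d := by field_simp
  rw [this, Real.logb_div (by linarith) (by linarith), hβdef, hαdef]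
end

section
/- Let X and Y be independent random variables each uniformly distributed on (0,1). Then for each digit d ∈ {1,...,9}, the probability that the first significant digit of X/Y equals d is (1/18)·[1 + 10/(d(d+1))]. -/
open MeasureTheory

lemma aux_lint_linear (c : ℝ) (hc : 0 ≤ c) :
    ∫⁻ t in Set.Ioo (0:ℝ) 1, ENNReal.ofReal (c * t) = ENNReal.ofReal (c / 2) := by
  have hint : IntegrableOn (fun t : ℝ => c * t) (Set.Ioo 0 1) := by
    exact ((continuous_const.mul continuous_id).integrableOn_Icc (a := (0:ℝ)) (b := 1)).mono_set
      Set.Ioo_subset_Icc_self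
  have hnn : 0 ≤ᵐ[volume.restrict (Set.Ioo (0:ℝ) 1)] fun t => c * t := by
    refine (ae_restrict_iff' measurableSet_Ioo).2 (Filter.Eventually.of_forall ?_)
    intro t ht
    exact mul_nonneg hc ht.1.le
  rw [← MeasureTheory.ofReal_integral_eq_lintegral_ofReal hint hnn]
  congr 1
  have h1 : ∫ t in Set.Ioo (0:ℝ) 1, c * t = ∫ t in (0:ℝ)..1, c * t := by
    rw [intervalIntegral.integral_of_le zero_le_one, MeasureTheory.integral_Ioc_eq_integral_Ioo]
  rw [h1, intervalIntegral.integral_const_mul, integral_id]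
  ring

lemma aux_geom (c : ℝ) (hc : 0 ≤ c) :
    ∑' n : ℕ, ENNReal.ofReal (c * (1/10 : ℝ) ^ n) = ENNReal.ofReal (c * (10 / 9)) := by
  rw [← ENNReal.ofReal_tsum_of_nonneg (fun n => by positivity)
    ((summable_geometric_of_lt_one (by norm_num) (by norm_num)).mul_left c)]
  congr 1
  rw [tsum_mul_left, tsum_geometric_of_lt_one (by norm_num) (by norm_num)]
  norm_num

set_option maxHeartbeats 1600000 in
theorem stmt8 (d : ℕ) (hd : d ∈ Finset.Icc 1 9) :
    (((volume : Measure ℝ).restrict (Set.Ioo 0 1)).prod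
        ((volume : Measure ℝ).restrict (Set.Ioo 0 1)))
      {p : ℝ × ℝ | firstDigit d (p.1 / p.2)}
      = ENNReal.ofReal ((1/18) * (1 + 10 / ((d : ℝ) * ((d : ℝ) + 1)))) := by
  simp only [Finset.mem_Icc] at hd
  set D : ℝ := (d : ℝ) with hD
  have hD1 : (1:ℝ) ≤ D := by rw [hD]; exact_mod_cast hd.1
  have hD0 : (0:ℝ) < D := lt_of_lt_of_le one_pos hD1
  have hD1' : (0:ℝ) < D + 1 := by linarith
  have hk : (0:ℝ) ≤ (1 / D - 1 / (D + 1)) / 2 := by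
    have h : 1 / (D + 1) ≤ 1 / D := by
      apply div_le_div_of_nonneg_left one_pos.le hD0
      linarith
    linarith
  have harith : (1 / D - 1 / (D + 1)) / 2 * (10 / 9) + 1 / 20 * (10 / 9 : ℝ)
      = 1/18 * (1 + 10 / (D * (D + 1))) := by
    field_simp
    ring
  set μ0 : Measure ℝ := volume.restrict (Set.Ioo 0 1) with hμ0
  -- the pieces
  set S : ℤ → Set (ℝ × ℝ) :=
    fun n => {p : ℝ × ℝ | p.1 / p.2 ∈ Set.Ico (D * 10 ^ n) ((D + 1) * 10 ^ n)} with hS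
  have hSmeas : ∀ n, MeasurableSet (S n) := fun n =>
    (measurable_fst.div measurable_snd) measurableSet_Ico
  have hset : {p : ℝ × ℝ | firstDigit d (p.1 / p.2)} = ⋃ n : ℤ, S n := by
    ext p
    simp [hS, firstDigit, Set.mem_Ico, Set.mem_iUnion]
    exact Iff.rfl
  have hdisj : Pairwise (Function.onFun Disjoint S) := by
    have key : ∀ m n : ℤ, m < n → Disjoint (S m) (S n) := by
      intro m n hmn
      have h10 : ((D + 1) : ℝ) * 10 ^ m ≤ D * 10 ^ n := by
        have h1 : (D + 1 : ℝ) ≤ 10 * D := by linarith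
        have h2 : (10:ℝ) ^ m * 10 ≤ 10 ^ n := by
          rw [← zpow_add_one₀ (by norm_num : (10:ℝ) ≠ 0)]
          exact zpow_le_zpow_right₀ (by norm_num) (by omega)
        calc (D + 1) * 10 ^ m ≤ 10 * D * 10 ^ m := by nlinarith [zpow_pos (show (0:ℝ) < 10 by norm_num) m]
          _ = D * (10 ^ m * 10) := by ring
          _ ≤ D * 10 ^ n := by nlinarith
      have : Disjoint (Set.Ico (D * 10 ^ m) ((D + 1) * 10 ^ m))
          (Set.Ico (D * 10 ^ n) ((D + 1) * 10 ^ n)) := by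
        rw [Set.Ico_disjoint_Ico]
        exact le_trans (min_le_left _ _) (le_trans h10 (le_max_right _ _))
      exact Set.disjoint_left.2 fun p hp hp' => Set.disjoint_left.1 this hp hp'
    intro m n hmn
    rcases lt_or_gt_of_ne hmn with h | h
    · exact key m n h
    · exact (key n m h).symm
  rw [hset, measure_iUnion hdisj hSmeas]
  -- value of each piece
  have hval : ∀ n : ℤ, (μ0.prod μ0) (S n) =
      ENNReal.ofReal (if 0 ≤ n then (1 / D - 1 / (D + 1)) * (10:ℝ) ^ (-n) / 2
        else (10:ℝ) ^ n / 2) := by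
    intro n
    have h10n : (0:ℝ) < (10:ℝ) ^ n := zpow_pos (by norm_num) n
    by_cases hn : 0 ≤ n
    · -- slice in the second variable: integrate over x
      have hα1 : (1:ℝ) ≤ D * 10 ^ n := by
        have : (1:ℝ) ≤ (10:ℝ) ^ n := one_le_zpow₀ (by norm_num) hn
        nlinarith
      rw [Measure.prod_apply (hSmeas n)]
      have hslice : ∀ x ∈ Set.Ioo (0:ℝ) 1,
          μ0 (Prod.mk x ⁻¹' S n) =
            ENNReal.ofReal ((1 / (D * 10 ^ n) - 1 / ((D + 1) * 10 ^ n)) * x) := by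
        intro x hx
        have hx0 := hx.1
        have hx1 := hx.2
        have hmeas : MeasurableSet (Prod.mk x ⁻¹' S n) := by
          exact (measurable_const.div measurable_id) measurableSet_Ico
        rw [hμ0, Measure.restrict_apply hmeas]
        have hsetx : (Prod.mk x ⁻¹' S n) ∩ Set.Ioo 0 1
            = Set.Ioc (x / ((D + 1) * 10 ^ n)) (x / (D * 10 ^ n)) := by
          have hα0 : (0:ℝ) < D * 10 ^ n := by positivity
          have hβ0 : (0:ℝ) < (D + 1) * 10 ^ n := by positivity
          ext y
          simp only [Set.mem_inter_iff, Set.mem_preimage, hS, Set.mem_setOf_eq,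
            Set.mem_Ico, Set.mem_Ioo, Set.mem_Ioc]
          constructor
          · rintro ⟨⟨h1, h2⟩, hy0, hy1⟩
            rw [le_div_iff₀ hy0] at h1
            rw [div_lt_iff₀ hy0] at h2
            constructor
            · rw [div_lt_iff₀ hβ0]
              nlinarith
            · rw [le_div_iff₀ hα0]
              nlinarith
          · rintro ⟨h1, h2⟩
            have hy0 : 0 < y := lt_trans (by positivity) h1
            have hy1 : y < 1 :=
              lt_of_le_of_lt (h2.trans (div_le_self hx0.le hα1)) hx1
            rw [div_lt_iff₀ hβ0] at h1
            rw [le_div_iff₀ hα0] at h2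
            refine ⟨⟨?_, ?_⟩, hy0, hy1⟩
            · rw [le_div_iff₀ hy0]
              nlinarith
            · rw [div_lt_iff₀ hy0]
              nlinarith
        rw [hsetx, Real.volume_Ioc]
        congr 1
        ring
      rw [hμ0] at hslice ⊢
      rw [setLIntegral_congr_fun measurableSet_Ioo hslice]
      have hc : (0:ℝ) ≤ 1 / (D * 10 ^ n) - 1 / ((D + 1) * 10 ^ n) := by
        rw [sub_nonneg]
        apply div_le_div_of_nonneg_left one_pos.le (by positivity)
        have := mul_le_mul_of_nonneg_right (le_of_lt (by linarith : D < D + 1)) h10n.le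
        linarith
      rw [aux_lint_linear _ hc, if_pos hn]
      congr 1
      rw [zpow_neg]
      simp only [one_div, mul_inv]
      ring
    · -- slice in the first variable: integrate over y
      push_neg at hn
      have hβ1 : (D + 1) * 10 ^ n ≤ 1 := by
        have h2 : (10:ℝ) ^ n ≤ 10 ^ (-1 : ℤ) := zpow_le_zpow_right₀ (by norm_num) (by omega)
        have h3 : (10:ℝ) ^ (-1 : ℤ) = 1 / 10 := by norm_num
        have hD9 : D ≤ 9 := by rw [hD]; exact_mod_cast hd.2
        rw [h3] at h2
        nlinarith [mul_nonneg (by linarith : (0:ℝ) ≤ 10 - (D + 1)) h10n.le]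
      rw [Measure.prod_apply_symm (hSmeas n)]
      have hslice : ∀ y ∈ Set.Ioo (0:ℝ) 1,
          μ0 ((fun x => (x, y)) ⁻¹' S n) = ENNReal.ofReal ((10:ℝ) ^ n * y) := by
        intro y hy
        have hy0 := hy.1
        have hy1 := hy.2
        have hmeas : MeasurableSet ((fun x => (x, y)) ⁻¹' S n) := by
          exact (measurable_id.div measurable_const) measurableSet_Ico
        rw [hμ0, Measure.restrict_apply hmeas]
        have hsetx : ((fun x => (x, y)) ⁻¹' S n) ∩ Set.Ioo 0 1
            = Set.Ico (D * 10 ^ n * y) ((D + 1) * 10 ^ n * y) := by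
          have hα0 : (0:ℝ) < D * 10 ^ n := by positivity
          ext x
          simp only [Set.mem_inter_iff, Set.mem_preimage, hS, Set.mem_setOf_eq,
            Set.mem_Ico, Set.mem_Ioo]
          rw [le_div_iff₀ hy0, div_lt_iff₀ hy0]
          constructor
          · rintro ⟨⟨h1, h2⟩, _, _⟩
            exact ⟨h1, h2⟩
          · rintro ⟨h1, h2⟩
            have hx0 : 0 < x := lt_of_lt_of_le (by positivity) h1
            have hx1 : x < 1 := by
              nlinarith [mul_nonneg (by linarith : (0:ℝ) ≤ 1 - (D + 1) * 10 ^ n) hy0.le]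
            exact ⟨⟨h1, h2⟩, hx0, hx1⟩
        rw [hsetx, Real.volume_Ico]
        congr 1
        ring
      rw [hμ0] at hslice ⊢
      rw [setLIntegral_congr_fun measurableSet_Ioo hslice]
      rw [aux_lint_linear _ h10n.le, if_neg (not_le.2 hn)]
  simp_rw [hval]
  -- split the sum over ℤ
  rw [tsum_of_nat_of_neg_add_one ENNReal.summable ENNReal.summable]
  have hpos : ∀ n : ℕ, (if 0 ≤ (n:ℤ) then (1 / D - 1 / (D + 1)) * (10:ℝ) ^ (-(n:ℤ)) / 2
        else (10:ℝ) ^ (n:ℤ) / 2) = ((1 / D - 1 / (D + 1)) / 2) * (1/10 : ℝ) ^ n := by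
    intro n
    rw [if_pos (Int.ofNat_nonneg n)]
    rw [zpow_neg, zpow_natCast]
    rw [div_pow, one_pow]
    ring
  have hneg : ∀ n : ℕ, (if 0 ≤ (-((n:ℤ)+1)) then (1 / D - 1 / (D + 1)) * (10:ℝ) ^ (-(-((n:ℤ)+1))) / 2
        else (10:ℝ) ^ (-((n:ℤ)+1)) / 2) = (1/20 : ℝ) * (1/10 : ℝ) ^ n := by
    intro n
    rw [if_neg (by omega)]
    rw [show (-((n:ℤ)+1)) = -(n+1 : ℕ) by push_cast; ring, zpow_neg, zpow_natCast]
    rw [pow_succ, div_pow, one_pow, mul_inv]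
    ring
  rw [tsum_congr fun n => congrArg ENNReal.ofReal (hpos n),
    tsum_congr fun n => congrArg ENNReal.ofReal (hneg n)]
  rw [aux_geom _ hk, aux_geom _ (by norm_num),
    ← ENNReal.ofReal_add (mul_nonneg hk (by norm_num)) (by norm_num)]
  exact congrArg ENNReal.ofReal harith
end
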